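/- Let G1 and G2 be undirected circulant graphs (Cayley graphs of cyclic groups with symmetric connection sets not containing 0) of diameters k1, k2, orders n1, n2, and degrees d1, d2. If at least one of d1, d2 is even, then there exists an undirected circulant graph of order n1·n2, degree at most d1 + d2, and diameter at most k1 + k2; if both d1 and d2 are odd, degree at most d1 + d2 + 1 suffices. -/

import Mathlib

private theorem aux_stmt_4 (n1 n2 k1 k2 d1 d2 : ℕ) (hn1 : 0 < n1) (hn2 : 0 < n2)
    (S1 : Finset (ZMod n1)) (S2 : Finset (ZMod n2))
    (h01 : (0 : ZMod n1) ∉ S1) (h02 : (0 : ZMod n2) ∉ S2)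
    (hsym1 : ∀ s ∈ S1, -s ∈ S1) (hsym2 : ∀ s ∈ S2, -s ∈ S2)
    (hd1 : S1.card = d1) (hd2 : S2.card = d2)
    (hdiam1 : ∀ x : ZMod n1, ∃ l : List (ZMod n1),
      l.length ≤ k1 ∧ (∀ a ∈ l, a ∈ S1) ∧ l.sum = x)
    (hdiam2 : ∀ x : ZMod n2, ∃ l : List (ZMod n2),
      l.length ≤ k2 ∧ (∀ a ∈ l, a ∈ S2) ∧ l.sum = x) :
    ∃ S : Finset (ZMod (n1 * n2)), (0 : ZMod (n1 * n2)) ∉ S ∧ (∀ s ∈ S, -s ∈ S) ∧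
      S.card ≤ d1 + d2 + 1 ∧ (Even d2 → S.card ≤ d1 + d2) ∧
      ∀ x : ZMod (n1 * n2), ∃ l : List (ZMod (n1 * n2)),
        l.length ≤ k1 + k2 ∧ (∀ a ∈ l, a ∈ S) ∧ l.sum = x := by
  haveI : NeZero n1 := ⟨hn1.ne'⟩
  haveI : NeZero n2 := ⟨hn2.ne'⟩
  haveI : NeZero (n1 * n2) := ⟨(Nat.mul_pos hn1 hn2).ne'⟩
  classical
  -- the additive hom `φ : ZMod n1 →+ ZMod (n1*n2)`, `a ↦ n2 * a`
  set g : ℤ →+ ZMod (n1 * n2) :=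
    { toFun := fun m => (n2 : ZMod (n1 * n2)) * m,
      map_zero' := by simp,
      map_add' := fun a b => by push_cast; ring } with hgdef
  have hg : g (n1 : ℤ) = 0 := by
    show (n2 : ZMod (n1 * n2)) * ((n1 : ℤ) : ZMod (n1 * n2)) = 0
    push_cast
    rw [← Nat.cast_mul, Nat.mul_comm, ZMod.natCast_self]
  set φ : ZMod n1 →+ ZMod (n1 * n2) := ZMod.lift n1 ⟨g, hg⟩ with hφdef
  have hφnat : ∀ m : ℕ, φ (m : ZMod n1) = ((n2 * m : ℕ) : ZMod (n1 * n2)) := by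
    intro m
    have h1 : ((m : ℤ) : ZMod n1) = (m : ZMod n1) := by push_cast; ring
    rw [← h1, hφdef, ZMod.lift_coe]
    show (n2 : ZMod (n1 * n2)) * ((m : ℤ) : ZMod (n1 * n2)) = _
    push_cast; ring
  have hφ0 : ∀ a : ZMod n1, φ a = 0 → a = 0 := by
    intro a ha
    rw [← ZMod.natCast_rightInverse a, hφnat] at ha
    rw [ZMod.natCast_eq_zero_iff] at ha
    obtain ⟨c, hc⟩ := ha
    have hc2 : a.val = n1 * c := by
      have : n2 * a.val = n2 * (n1 * c) := by rw [hc]; ring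
      exact Nat.eq_of_mul_eq_mul_left hn2 this
    have hlt : a.val < n1 := ZMod.val_lt a
    have : a.val = 0 := Nat.eq_zero_of_dvd_of_lt ⟨c, hc2⟩ hlt
    rwa [ZMod.val_eq_zero] at this
  set π : ZMod (n1 * n2) →+* ZMod n2 := ZMod.castHom (dvd_mul_left n2 n1) (ZMod n2) with hπdef
  have hπz : ∀ z : ZMod (n1 * n2), π z = ((z.val : ℕ) : ZMod n2) := by
    intro z
    conv_lhs => rw [← ZMod.natCast_rightInverse z]
    rw [map_natCast]
  have hker : ∀ z : ZMod (n1 * n2), π z = 0 → ∃ a : ZMod n1, φ a = z := by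
    intro z hz
    rw [hπz, ZMod.natCast_eq_zero_iff] at hz
    refine ⟨((z.val / n2 : ℕ) : ZMod n1), ?_⟩
    rw [hφnat, Nat.mul_div_cancel' hz, ZMod.natCast_rightInverse z]
  set lam : ZMod n2 → ZMod (n1 * n2) := fun s =>
    if 2 * s.val ≤ n2 then ((s.val : ℕ) : ZMod (n1 * n2))
    else -(((-s).val : ℕ) : ZMod (n1 * n2)) with hlamdef
  have hπlam : ∀ s : ZMod n2, π (lam s) = s := by
    intro s
    by_cases h : 2 * s.val ≤ n2
    · simp only [hlamdef, if_pos h, map_natCast]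
      exact ZMod.natCast_rightInverse s
    · simp only [hlamdef, if_neg h, map_neg, map_natCast]
      rw [ZMod.natCast_rightInverse (-s), neg_neg]
  have hlam0 : ∀ s : ZMod n2, s ≠ 0 → lam s ≠ 0 := by
    intro s hs h0
    exact hs (by rw [← hπlam s, h0, map_zero])
  have hlamsym : ∀ s : ZMod n2, -s ≠ s → lam (-s) = -(lam s) := by
    intro s hs
    have hs0 : s ≠ 0 := fun h => hs (by rw [h, neg_zero])
    have hneg : (-s).val = n2 - s.val := by rw [ZMod.neg_val, if_neg hs0]
    have hvpos : 0 < s.val := Nat.pos_of_ne_zero (fun h => hs0 (by rwa [ZMod.val_eq_zero] at h))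
    have hvlt : s.val < n2 := ZMod.val_lt s
    have hne : 2 * s.val ≠ n2 := by
      intro h
      exact hs (ZMod.val_injective n2 (by rw [hneg]; omega))
    by_cases h : 2 * s.val ≤ n2
    · have h' : ¬ 2 * (-s).val ≤ n2 := by rw [hneg]; omega
      simp only [hlamdef, if_pos h, if_neg h', neg_neg]
    · have h' : 2 * (-s).val ≤ n2 := by rw [hneg]; omega
      simp only [hlamdef, if_neg h, if_pos h', neg_neg]
  set C : Finset (ZMod n2) := S2.filter (fun s => -s = s) with hCdef
  have hCval : ∀ a ∈ C, 2 * a.val = n2 := by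
    intro a ha
    obtain ⟨haS, hina⟩ := Finset.mem_filter.1 ha
    have ha0 : a ≠ 0 := fun h => h02 (h ▸ haS)
    have h1 : (-a).val = n2 - a.val := by rw [ZMod.neg_val, if_neg ha0]
    have h2 : (-a).val = a.val := by rw [hina]
    have h3 : 0 < a.val := Nat.pos_of_ne_zero (fun h => ha0 (by rwa [ZMod.val_eq_zero] at h))
    have h4 : a.val < n2 := ZMod.val_lt a
    omega
  have hCcard : C.card ≤ 1 := by
    refine Finset.card_le_one.2 (fun a ha b hb => ?_)
    have h1 := hCval a ha
    have h2 := hCval b hb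
    exact ZMod.val_injective n2 (by omega)
  have hCempty : Even d2 → C = ∅ := by
    intro he
    set T : Finset (ZMod n2) := S2.filter (fun s => ¬ -s = s) with hTdef
    have hTeven : Even T.card := by
      have h1 : ∏ _x ∈ T, (-1 : ℤ) = 1 := by
        refine Finset.prod_involution (fun a _ => -a) (fun a ha => by norm_num)
          (fun a ha _ => (Finset.mem_filter.1 ha).2) (fun a ha => ?_) (fun a ha => neg_neg a)
        obtain ⟨h1, h2⟩ := Finset.mem_filter.1 ha
        refine Finset.mem_filter.2 ⟨hsym2 a h1, fun h => h2 ?_⟩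
        simpa using h.symm
      rwa [Finset.prod_const, neg_one_pow_eq_one_iff_even (by norm_num)] at h1
    have hsplit : C.card + T.card = d2 := by
      rw [hCdef, hTdef, ← hd2]
      exact Finset.card_filter_add_card_filter_not _
    have hCe : C.card = 0 := by
      obtain ⟨p, hp⟩ := he
      obtain ⟨q, hq⟩ := hTeven
      omega
    exact Finset.card_eq_zero.1 hCe
  set S : Finset (ZMod (n1 * n2)) :=
    (S1.image φ) ∪ (S2.image lam) ∪ (C.image fun s => -(lam s)) with hSdef
  have hφS : ∀ a ∈ S1, φ a ∈ S := fun a ha =>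
    Finset.mem_union_left _ (Finset.mem_union_left _ (Finset.mem_image_of_mem _ ha))
  have hlamS : ∀ s ∈ S2, lam s ∈ S := fun s hs =>
    Finset.mem_union_left _ (Finset.mem_union_right _ (Finset.mem_image_of_mem _ hs))
  refine ⟨S, ?_, ?_, ?_, ?_, ?_⟩
  · -- 0 ∉ S
    intro h0
    rcases Finset.mem_union.1 h0 with h | h
    · rcases Finset.mem_union.1 h with h | h
      · obtain ⟨a, haS, ha⟩ := Finset.mem_image.1 h
        exact h01 (hφ0 a ha ▸ haS)
      · obtain ⟨s, hsS, hs⟩ := Finset.mem_image.1 h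
        exact hlam0 s (fun h => h02 (h ▸ hsS)) hs
    · obtain ⟨s, hsC, hs⟩ := Finset.mem_image.1 h
      have hsS : s ∈ S2 := (Finset.mem_filter.1 hsC).1
      exact hlam0 s (fun h => h02 (h ▸ hsS)) (neg_eq_zero.1 hs)
  · -- symmetry
    intro s hs
    rcases Finset.mem_union.1 hs with h | h
    · rcases Finset.mem_union.1 h with h | h
      · obtain ⟨a, haS, rfl⟩ := Finset.mem_image.1 h
        rw [← map_neg]
        exact hφS _ (hsym1 a haS)
      · obtain ⟨u, huS, rfl⟩ := Finset.mem_image.1 h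
        by_cases hu : -u = u
        · exact Finset.mem_union_right _
            (Finset.mem_image_of_mem _ (Finset.mem_filter.2 ⟨huS, hu⟩))
        · rw [← hlamsym u hu]
          exact hlamS _ (hsym2 u huS)
    · obtain ⟨u, huC, rfl⟩ := Finset.mem_image.1 h
      rw [neg_neg]
      exact hlamS _ (Finset.mem_filter.1 huC).1
  · -- card ≤ d1 + d2 + 1
    calc S.card ≤ ((S1.image φ) ∪ (S2.image lam)).card + (C.image fun s => -(lam s)).card :=
          Finset.card_union_le _ _
      _ ≤ (S1.image φ).card + (S2.image lam).card + (C.image fun s => -(lam s)).card := by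
          have := Finset.card_union_le (S1.image φ) (S2.image lam); omega
      _ ≤ d1 + d2 + 1 := by
          have h1 := Finset.card_image_le (s := S1) (f := φ)
          have h2 := Finset.card_image_le (s := S2) (f := lam)
          have h3 := Finset.card_image_le (s := C) (f := fun s => -(lam s))
          omega
  · -- Even d2 → card ≤ d1 + d2
    intro he
    have hCe := hCempty he
    calc S.card ≤ ((S1.image φ) ∪ (S2.image lam)).card + (C.image fun s => -(lam s)).card :=
          Finset.card_union_le _ _
      _ ≤ d1 + d2 := by
          have h0 := Finset.card_union_le (S1.image φ) (S2.image lam)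
          have h1 := Finset.card_image_le (s := S1) (f := φ)
          have h2 := Finset.card_image_le (s := S2) (f := lam)
          rw [hCe] at *
          simp only [Finset.image_empty, Finset.card_empty]
          omega
  · -- diameter
    intro x
    obtain ⟨l2, hl2len, hl2mem, hl2sum⟩ := hdiam2 (π x)
    set L : List (ZMod (n1 * n2)) := l2.map lam with hLdef
    have hLsum : π L.sum = π x := by
      rw [hLdef, map_list_sum, List.map_map]
      have hid : (π ∘ lam) = id := funext hπlam
      rw [hid, List.map_id, hl2sum]
    obtain ⟨a, ha⟩ := hker (x - L.sum) (by rw [map_sub, hLsum, sub_self])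
    obtain ⟨l1, hl1len, hl1mem, hl1sum⟩ := hdiam1 a
    refine ⟨l1.map φ ++ L, ?_, ?_, ?_⟩
    · rw [List.length_append, List.length_map, hLdef, List.length_map]
      omega
    · intro b hb
      rcases List.mem_append.1 hb with h | h
      · obtain ⟨c, hc, rfl⟩ := List.mem_map.1 h
        exact hφS c (hl1mem c hc)
      · obtain ⟨c, hc, rfl⟩ := List.mem_map.1 h
        exact hlamS c (hl2mem c hc)
    · rw [List.sum_append, ← map_list_sum, hl1sum, ha, sub_add_cancel]

theorem stmt_4 (n1 n2 k1 k2 d1 d2 : ℕ) (hn1 : 0 < n1) (hn2 : 0 < n2)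
    (S1 : Finset (ZMod n1)) (S2 : Finset (ZMod n2))
    (h01 : (0 : ZMod n1) ∉ S1) (h02 : (0 : ZMod n2) ∉ S2)
    (hsym1 : ∀ s ∈ S1, -s ∈ S1) (hsym2 : ∀ s ∈ S2, -s ∈ S2)
    (hd1 : S1.card = d1) (hd2 : S2.card = d2)
    (hdiam1 : ∀ x : ZMod n1, ∃ l : List (ZMod n1),
      l.length ≤ k1 ∧ (∀ a ∈ l, a ∈ S1) ∧ l.sum = x)
    (hdiam2 : ∀ x : ZMod n2, ∃ l : List (ZMod n2),
      l.length ≤ k2 ∧ (∀ a ∈ l, a ∈ S2) ∧ l.sum = x) :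
    ∃ S : Finset (ZMod (n1 * n2)), (0 : ZMod (n1 * n2)) ∉ S ∧ (∀ s ∈ S, -s ∈ S) ∧
      ((Even d1 ∨ Even d2) → S.card ≤ d1 + d2) ∧
      (Odd d1 → Odd d2 → S.card ≤ d1 + d2 + 1) ∧
      ∀ x : ZMod (n1 * n2), ∃ l : List (ZMod (n1 * n2)),
        l.length ≤ k1 + k2 ∧ (∀ a ∈ l, a ∈ S) ∧ l.sum = x := by
  rcases Nat.even_or_odd d2 with he2 | ho2
  · obtain ⟨S, h0, hs, _, hc2, hdiam⟩ :=
      aux_stmt_4 n1 n2 k1 k2 d1 d2 hn1 hn2 S1 S2 h01 h02 hsym1 hsym2 hd1 hd2 hdiam1 hdiam2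
    exact ⟨S, h0, hs, fun _ => hc2 he2,
      fun _ ho2' => absurd he2 (Nat.not_even_iff_odd.2 ho2'), hdiam⟩
  · rcases Nat.even_or_odd d1 with he1 | ho1
    · obtain ⟨S, h0, hs, _, hc2, hdiam⟩ :=
        aux_stmt_4 n2 n1 k2 k1 d2 d1 hn2 hn1 S2 S1 h02 h01 hsym2 hsym1 hd2 hd1 hdiam2 hdiam1
      rw [Nat.mul_comm n1 n2]
      refine ⟨S, h0, hs, fun _ => ?_, fun h1 _ => ?_, fun x => ?_⟩
      · have := hc2 he1; omega
      · exact absurd he1 (Nat.not_even_iff_odd.2 h1)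
      · obtain ⟨l, hl1, hl2, hl3⟩ := hdiam x
        exact ⟨l, by omega, hl2, hl3⟩
    · obtain ⟨S, h0, hs, hc1, _, hdiam⟩ :=
        aux_stmt_4 n1 n2 k1 k2 d1 d2 hn1 hn2 S1 S2 h01 h02 hsym1 hsym2 hd1 hd2 hdiam1 hdiam2
      refine ⟨S, h0, hs, fun h => ?_, fun _ _ => hc1, hdiam⟩
      rcases h with h | h
      · exact absurd h (Nat.not_even_iff_odd.2 ho1)
      · exact absurd h (Nat.not_even_iff_odd.2 ho2)
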